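/- Let H be a chordal graph and let G₀ be the graph obtained from H by adding a new vertex x joined to every vertex of H. Then b(G₀ - {x}) = b(G₀) - 1. -/
import Mathlib


/-- A b-coloring of `G` with `k` colors: a proper vertex coloring `c : V → Fin k` such
that every color class contains a vertex adjacent to a vertex of every other color class. -/
def SimpleGraph.IsBColoring {V : Type*} (G : SimpleGraph V) {k : ℕ} (c : V → Fin k) : Prop :=
  (∀ u v, G.Adj u v → c u ≠ c v) ∧
    ∀ i : Fin k, ∃ v, c v = i ∧ ∀ j : Fin k, j ≠ i → ∃ u, G.Adj v u ∧ c u = j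

/-- The b-chromatic number of `G`: the largest `k` such that `G` admits a b-coloring
with `k` colors. -/
noncomputable def SimpleGraph.bChromaticNumber {V : Type*} (G : SimpleGraph V) : ℕ :=
  sSup {k | ∃ c : V → Fin k, G.IsBColoring c}
/-- A walk has a chord if two of its vertices are adjacent in `G` via an edge
not belonging to the walk. -/
def SimpleGraph.Walk.HasChord {V : Type*} {G : SimpleGraph V} {a : V} (w : G.Walk a a) : Prop :=
  ∃ u v : V, u ∈ w.support ∧ v ∈ w.support ∧ G.Adj u v ∧ s(u, v) ∉ w.edges

/-- A chordal graph: every cycle of length at least `4` has a chord. -/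
def SimpleGraph.IsChordalGraph {V : Type*} (G : SimpleGraph V) : Prop :=
  ∀ (a : V) (w : G.Walk a a), w.IsCycle → 4 ≤ w.length → w.HasChord

/-- The graph obtained from `H` by adding a new vertex (`none`) joined to every
vertex of `H`. -/
def SimpleGraph.addUniversalVertex {W : Type*} (H : SimpleGraph W) : SimpleGraph (Option W) :=
  SimpleGraph.fromRel (fun u v => u = none ∨ ∃ a b, u = some a ∧ v = some b ∧ H.Adj a b)

section Aux

variable {W : Type*} (H : SimpleGraph W)

lemma auv_adj_none_some (a : W) : H.addUniversalVertex.Adj none (some a) := by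
  refine ⟨by simp, Or.inl (Or.inl rfl)⟩

lemma auv_adj_some_some {a b : W} :
    H.addUniversalVertex.Adj (some a) (some b) ↔ H.Adj a b := by
  constructor
  · rintro ⟨hne, (h | ⟨x, y, hx, hy, hxy⟩) | (h | ⟨x, y, hx, hy, hxy⟩)⟩
    · simp at h
    · obtain rfl := Option.some.inj hx
      obtain rfl := Option.some.inj hy
      exact hxy
    · simp at h
    · obtain rfl := Option.some.inj hx
      obtain rfl := Option.some.inj hy
      exact hxy.symm
  · intro h
    exact ⟨by simpa using h.ne, Or.inl (Or.inr ⟨a, b, rfl, rfl, h⟩)⟩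

/-- membership of `some a` in `{none}ᶜ` -/
lemma some_mem_compl (a : W) : (some a : Option W) ∈ ({(none : Option W)}ᶜ : Set (Option W)) := by
  simp

lemma subtype_eq_some (v : ({(none : Option W)}ᶜ : Set (Option W))) : ∃ a, v.val = some a := by
  rcases h : v.val with _ | a
  · exact ((Set.mem_compl_singleton_iff.mp v.2) h).elim
  · exact ⟨a, rfl⟩

-- the restriction lemma: a b-coloring of G₀ with k+1 colors, with `none` colored `last`,
-- restricts to a b-coloring of the induced subgraph with k colors.
lemma restrict_bcoloring {k : ℕ} (c : Option W → Fin (k + 1))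
    (hc : H.addUniversalVertex.IsBColoring c) (hnone : c none = Fin.last k) :
    ∃ c' : ({(none : Option W)}ᶜ : Set (Option W)) → Fin k,
      (H.addUniversalVertex.induce ({(none : Option W)}ᶜ : Set (Option W))).IsBColoring c' := by
  have hne : ∀ v : ({(none : Option W)}ᶜ : Set (Option W)), c v.val ≠ Fin.last k := by
    rintro ⟨v, hv⟩
    obtain ⟨a, rfl⟩ : ∃ a, v = some a := by
      cases v with
      | none => exact absurd rfl hv
      | some a => exact ⟨a, rfl⟩
    intro h
    exact hc.1 none (some a) (auv_adj_none_some H a) (by rw [hnone, h])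
  refine ⟨fun v => (c v.val).castPred (hne v), ?_, ?_⟩
  · intro u v huv h
    exact hc.1 u.val v.val huv (by
      have := congrArg (Fin.castSucc) h
      rwa [Fin.castSucc_castPred, Fin.castSucc_castPred] at this)
  · intro i
    obtain ⟨v, hv, hb⟩ := hc.2 i.castSucc
    have hvne : v ≠ none := by
      intro h; subst h
      exact (Fin.castSucc_lt_last i).ne (hv.symm.trans hnone)
    refine ⟨⟨v, Set.mem_compl_singleton_iff.mpr hvne⟩, by simp [hv], ?_⟩
    intro j hj
    obtain ⟨u, hu, hcu⟩ := hb j.castSucc (by simpa using hj)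
    have hune : u ≠ none := by
      intro h; subst h
      exact (Fin.castSucc_lt_last j).ne (hcu.symm.trans hnone)
    exact ⟨⟨u, Set.mem_compl_singleton_iff.mpr hune⟩, hu, by simp [hcu]⟩

-- the extension lemma
lemma extend_bcoloring {k : ℕ} (c : ({(none : Option W)}ᶜ : Set (Option W)) → Fin k)
    (hc : (H.addUniversalVertex.induce ({(none : Option W)}ᶜ : Set (Option W))).IsBColoring c) :
    ∃ c' : Option W → Fin (k + 1), H.addUniversalVertex.IsBColoring c' := by
  refine ⟨fun o => Option.rec (Fin.last k)
    (fun a => (c ⟨some a, some_mem_compl a⟩).castSucc) o, ?_, ?_⟩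
  · rintro (_ | a) (_ | b) hadj h
    · exact hadj.ne rfl
    · exact (Fin.castSucc_lt_last _).ne (h.symm)
    · exact (Fin.castSucc_lt_last _).ne h
    · have hab : H.addUniversalVertex.Adj (some a) (some b) := hadj
      refine hc.1 ⟨some a, some_mem_compl a⟩ ⟨some b, some_mem_compl b⟩ hab ?_
      exact Fin.castSucc_injective _ h
  · intro i
    rcases eq_or_ne i (Fin.last k) with rfl | hi
    · refine ⟨none, rfl, ?_⟩
      intro j hj
      obtain ⟨j', rfl⟩ := Fin.exists_castSucc_eq.mpr hj
      obtain ⟨v, hv, -⟩ := hc.2 j'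
      obtain ⟨a, ha⟩ := subtype_eq_some v
      refine ⟨some a, auv_adj_none_some H a, ?_⟩
      have : (⟨some a, some_mem_compl a⟩ : ({(none : Option W)}ᶜ : Set (Option W))) = v :=
        Subtype.ext ha.symm
      simp [this, hv]
    · obtain ⟨i', rfl⟩ := Fin.exists_castSucc_eq.mpr hi
      obtain ⟨v, hv, hb⟩ := hc.2 i'
      obtain ⟨a, ha⟩ := subtype_eq_some v
      have hva : (⟨some a, some_mem_compl a⟩ : ({(none : Option W)}ᶜ : Set (Option W))) = v :=
        Subtype.ext ha.symm
      refine ⟨some a, by simp [hva, hv], ?_⟩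
      intro j hj
      rcases eq_or_ne j (Fin.last k) with rfl | hjl
      · exact ⟨none, (auv_adj_none_some H a).symm, rfl⟩
      · obtain ⟨j', rfl⟩ := Fin.exists_castSucc_eq.mpr hjl
        obtain ⟨u, hu, hcu⟩ := hb j' (by
          intro h; exact hj (by rw [h]))
        obtain ⟨b, hbv⟩ := subtype_eq_some u
        have huadj : H.addUniversalVertex.Adj v.val u.val := hu
        have hub : (⟨some b, some_mem_compl b⟩ : ({(none : Option W)}ᶜ : Set (Option W))) = u :=
          Subtype.ext hbv.symm
        refine ⟨some b, ?_, by simp [hub, hcu]⟩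
        rw [← ha, ← hbv]; exact huadj

-- relabeling a b-coloring by a permutation of colors
lemma bcoloring_comp_equiv {V : Type*} (G : SimpleGraph V) {k : ℕ} (c : V → Fin k)
    (hc : G.IsBColoring c) (e : Fin k ≃ Fin k) : G.IsBColoring (e ∘ c) := by
  refine ⟨fun u v huv h => hc.1 u v huv (e.injective h), ?_⟩
  intro i
  obtain ⟨v, hv, hb⟩ := hc.2 (e.symm i)
  refine ⟨v, by simp [hv], ?_⟩
  intro j hj
  obtain ⟨u, hu, hcu⟩ := hb (e.symm j) (fun h => hj (by
    have := congrArg e h; simpa using this))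
  exact ⟨u, hu, by simp [hcu]⟩

end Aux

theorem bChromaticNumber_deleteUniversalVertex {W : Type*} [Fintype W] [DecidableEq W]
    (H : SimpleGraph W) (hH : H.IsChordalGraph) :
    (H.addUniversalVertex.induce ({(none : Option W)}ᶜ : Set (Option W))).bChromaticNumber =
      H.addUniversalVertex.bChromaticNumber - 1 := by
  classical
  set S : Set ℕ := {k | ∃ c : ({(none : Option W)}ᶜ : Set (Option W)) → Fin k,
    (H.addUniversalVertex.induce ({(none : Option W)}ᶜ : Set (Option W))).IsBColoring c} with hS
  set T : Set ℕ := {k | ∃ c : Option W → Fin k, H.addUniversalVertex.IsBColoring c} with hT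
  have hTS : ∀ k ∈ T, ∃ m, k = m + 1 ∧ m ∈ S := by
    intro k hk
    obtain ⟨c, hc⟩ := hk
    have hk1 : k ≠ 0 := by
      rintro rfl
      exact (c none).elim0
    obtain ⟨m, rfl⟩ := Nat.exists_eq_succ_of_ne_zero hk1
    refine ⟨m, rfl, ?_⟩
    -- relabel so that `none` has color `last`
    set e := Equiv.swap (c none) (Fin.last m) with he
    have hc' : H.addUniversalVertex.IsBColoring (e ∘ c) := bcoloring_comp_equiv _ c hc e
    have hnone : (e ∘ c) none = Fin.last m := by simp [he]
    exact restrict_bcoloring H (e ∘ c) hc' hnone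
  have hST : ∀ m ∈ S, m + 1 ∈ T := by
    intro m hm
    obtain ⟨c, hc⟩ := hm
    exact extend_bcoloring H c hc
  -- S is bounded above
  have hSbdd : BddAbove S := by
    refine ⟨Fintype.card ({(none : Option W)}ᶜ : Set (Option W)), ?_⟩
    rintro k ⟨c, hc⟩
    have hsurj : Function.Surjective c := fun i => by
      obtain ⟨v, hv, -⟩ := hc.2 i; exact ⟨v, hv⟩
    simpa using Fintype.card_le_of_surjective c hsurj
  rcases Set.eq_empty_or_nonempty S with hSe | hSne
  · have hTe : T = ∅ := by
      rw [Set.eq_empty_iff_forall_notMem]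
      intro k hk
      obtain ⟨m, -, hm⟩ := hTS k hk
      rw [hSe] at hm
      exact hm
    simp [SimpleGraph.bChromaticNumber, ← hS, ← hT, hSe, hTe]
  · have hmax : sSup S ∈ S := Nat.sSup_mem hSne hSbdd
    have hTbdd : BddAbove T := by
      refine ⟨sSup S + 1, ?_⟩
      intro k hk
      obtain ⟨m, rfl, hm⟩ := hTS k hk
      exact Nat.succ_le_succ (le_csSup hSbdd hm)
    have h1 : sSup T = sSup S + 1 := by
      refine le_antisymm (csSup_le ⟨sSup S + 1, hST _ hmax⟩ ?_) (le_csSup hTbdd (hST _ hmax))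
      intro k hk
      obtain ⟨m, rfl, hm⟩ := hTS k hk
      exact Nat.succ_le_succ (le_csSup hSbdd hm)
    show sSup S = sSup T - 1
    rw [h1]; simp
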